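/- Let α be a non-quadratic irrational real number and let β = (2·α + 1)/(α + 1). Then α and β are PGL₂(ℤ)-equivalent, but there is no integer k and no ε ∈ {1, −1} with α = ε·β + k. Consequently there exist irrational real numbers that are PGL₂(ℤ)-equivalent but not eventually PGL₂(ℤ)-equivalent. -/

import Mathlib

/-- Two irrational reals are `PGL₂(ℤ)`-equivalent when related by an integral
fractional linear transformation of determinant `±1`. -/
def PGL2ZEquiv (x y : ℝ) : Prop :=
  ∃ i j k l : ℤ, |i * l - j * k| = 1 ∧
    ((i : ℝ) * x + (j : ℝ)) / ((k : ℝ) * x + (l : ℝ)) = y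

lemma sqrt2_lin {a b : ℤ} (h : (a : ℝ) * Real.sqrt 2 + (b : ℝ) = 0) :
    a = 0 ∧ b = 0 := by
  by_cases ha : a = 0
  · subst ha
    simp only [Int.cast_zero, zero_mul, zero_add] at h
    exact ⟨rfl, by exact_mod_cast h⟩
  · exfalso
    have ha' : (a : ℝ) ≠ 0 := Int.cast_ne_zero.mpr ha
    have : Real.sqrt 2 = (((-b : ℚ) / (a : ℚ) : ℚ) : ℝ) := by
      push_cast
      field_simp
      linarith
    exact irrational_sqrt_two ⟨(-b : ℚ) / (a : ℚ), this.symm⟩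

lemma irrational_inv_sqrt2 : Irrational (Real.sqrt 2)⁻¹ := by
  have h2 : Real.sqrt 2 ≠ 0 := by positivity
  rintro ⟨q, hq⟩
  have hq0 : (q : ℝ) ≠ 0 := by
    rw [hq]; exact inv_ne_zero h2
  have : ((q⁻¹ : ℚ) : ℝ) = Real.sqrt 2 := by
    push_cast
    rw [hq, inv_inv]
  exact irrational_sqrt_two ⟨q⁻¹, this⟩

theorem stmt_18 (α β : ℝ) (hα : Irrational α)
    (hnq : LinearIndependent ℚ ![(1 : ℝ), α, α ^ 2])
    (hβ : β = (2 * α + 1) / (α + 1)) :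
    PGL2ZEquiv α β ∧
    (¬ ∃ (ε : ℝ) (k : ℤ), (ε = 1 ∨ ε = -1) ∧ α = ε * β + (k : ℝ)) ∧
    (∃ x y : ℝ, Irrational x ∧ Irrational y ∧ PGL2ZEquiv x y ∧
      ¬ ∃ m : ℕ, ∀ n : ℕ, m ≤ n → 1 ≤ n →
        PGL2ZEquiv ((n : ℝ) * x) ((n : ℝ) * y)) := by
  have hden : α + 1 ≠ 0 := by
    intro h
    have : α = ((-1 : ℚ) : ℝ) := by push_cast; linarith
    exact hα ⟨-1, this.symm⟩
  refine ⟨?_, ?_, ?_⟩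
  · -- PGL₂(ℤ)-equivalence of α and β
    refine ⟨2, 1, 1, 1, by norm_num, ?_⟩
    rw [hβ]; norm_num
  · -- no relation α = εβ + k
    rintro ⟨ε, k, hε, hrel⟩
    have key : α ^ 2 + (1 - (k : ℝ) - 2 * ε) * α + (-(k : ℝ) - ε) = 0 := by
      have : (α - (k : ℝ)) * (α + 1) = ε * (2 * α + 1) := by
        rw [hβ] at hrel
        field_simp at hrel
        nlinarith [hrel]
      nlinarith [this]
    -- express as rational linear combination
    have hli := Fintype.linearIndependent_iff.mp hnq
    set e : ℚ := if ε = 1 then 1 else -1 with he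
    have heR : (e : ℝ) = ε := by
      rcases hε with h | h <;> norm_num [he, h]
    have := hli ![-(k : ℚ) - e, 1 - (k : ℚ) - 2 * e, 1] ?_ 2
    · simp at this
    · show _ = 0
      have : ∀ (g : Fin 3 → ℚ),
          (∑ i, g i • ![(1 : ℝ), α, α ^ 2] i) =
            (g 0 : ℝ) * 1 + (g 1 : ℝ) * α + (g 2 : ℝ) * α ^ 2 := by
        intro g
        simp [Fin.sum_univ_three, Rat.smul_def]
      rw [this]
      simp only [Matrix.cons_val_zero, Matrix.cons_val_one, Matrix.head_cons, Matrix.cons_val_two, Matrix.tail_cons]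
      push_cast
      rw [heR]
      linear_combination key
  · -- the counterexample
    refine ⟨Real.sqrt 2, (Real.sqrt 2)⁻¹, irrational_sqrt_two, irrational_inv_sqrt2,
      ⟨0, 1, 1, 0, by norm_num, by
        have h2 : Real.sqrt 2 ≠ 0 := by positivity
        field_simp
        simp⟩, ?_⟩
    rintro ⟨m, hm⟩
    set c : ℕ := max m 1 with hc
    have hc1 : 1 ≤ c := le_max_right m 1
    set n : ℕ := 2 * c with hn
    have hsq : Real.sqrt 2 * Real.sqrt 2 = 2 := Real.mul_self_sqrt (by norm_num)
    have h2 : Real.sqrt 2 ≠ 0 := by positivity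
    have hinv : (n : ℝ) * (Real.sqrt 2)⁻¹ = (c : ℝ) * Real.sqrt 2 := by
      rw [hn]
      push_cast
      field_simp
      ring_nf
      nlinarith [hsq]
    obtain ⟨i, j, k, l, hdet, heq⟩ :=
      hm n (le_trans (le_max_left m 1) (by omega)) (by omega)
    rw [hinv] at heq
    -- denominator nonzero
    have hdenom : (k : ℝ) * ((n : ℝ) * Real.sqrt 2) + (l : ℝ) ≠ 0 := by
      intro h0
      have h0' : ((k * (n : ℤ) : ℤ) : ℝ) * Real.sqrt 2 + (l : ℝ) = 0 := by
        push_cast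
        linarith [h0]
      obtain ⟨h1, h2'⟩ := sqrt2_lin h0'
      have hk : k = 0 := by
        have : (n : ℤ) ≠ 0 := by positivity
        exact (mul_eq_zero.mp h1).resolve_right this
      rw [hk, h2'] at hdet
      simp at hdet
    have hcross : (i : ℝ) * ((n : ℝ) * Real.sqrt 2) + (j : ℝ) =
        (c : ℝ) * Real.sqrt 2 * ((k : ℝ) * ((n : ℝ) * Real.sqrt 2) + (l : ℝ)) := by
      rw [div_eq_iff hdenom] at heq
      linarith [heq]
    have hlin : ((i * (n : ℤ) - (c : ℤ) * l : ℤ) : ℝ) * Real.sqrt 2 +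
        ((j - 2 * (c : ℤ) * k * (n : ℤ) : ℤ) : ℝ) = 0 := by
      push_cast
      linear_combination hcross + (c : ℝ) * (k : ℝ) * (n : ℝ) * hsq
    obtain ⟨e1, e2⟩ := sqrt2_lin hlin
    -- from i * n = c * l with n = 2c, c ≥ 1: l = 2i
    have hnZ : (n : ℤ) = 2 * (c : ℤ) := by exact_mod_cast congrArg (Nat.cast) hn
    have hcpos : (0 : ℤ) < (c : ℤ) := by exact_mod_cast hc1
    have hl : l = 2 * i := by
      have : i * (2 * (c : ℤ)) - (c : ℤ) * l = 0 := by rw [← hnZ]; exact e1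
      have h' : (c : ℤ) * (2 * i - l) = 0 := by ring_nf; linarith [this]
      have := (mul_eq_zero.mp h').resolve_left (by omega)
      omega
    have hj : j = 2 * (c : ℤ) * k * (2 * (c : ℤ)) := by
      have : j - 2 * (c : ℤ) * k * (n : ℤ) = 0 := e2
      rw [hnZ] at this; omega
    -- determinant is even
    have : i * l - j * k = 2 * (i * i - 2 * (c : ℤ) * (c : ℤ) * k * k) := by
      rw [hl, hj]; ring
    rw [this] at hdet
    rcases abs_eq (by norm_num : (0:ℤ) ≤ 1) |>.mp hdet with h | h <;> omega
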